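/- For every natural number k and every HA-formula φ in Π_k (respectively Σ_k), the theory HA^$ + Σ_k-LEM proves φ^$ ↔ (φ ∨ $). -/

import Mathlib

namespace SemiClassicalArith

/-- Terms of arithmetic: variables (de Bruijn indices) and function symbols
(one symbol of each arity for every code, covering all primitive recursive functions). -/
inductive Term : Type
  | var : ℕ → Term
  | func : (code : ℕ) → (arity : ℕ) → (Fin arity → Term) → Term

namespace Term

/-- Shift all variables `≥ d` up by one. -/
def lift (d : ℕ) : Term → Term
  | var n => if n < d then var n else var (n + 1)
  | func c a ts => func c a fun i => (ts i).lift d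

/-- Binder-removing substitution of `s` for variable `k`. -/
def subst (k : ℕ) (s : Term) : Term → Term
  | var n => if n < k then var n else if n = k then s else var (n - 1)
  | func c a ts => func c a fun i => Term.subst k s (ts i)

/-- In-place replacement of variable `k` by `s` (no shifting of other variables). -/
def repl (k : ℕ) (s : Term) : Term → Term
  | var n => if n = k then s else var n
  | func c a ts => func c a fun i => Term.repl k s (ts i)

/-- Free variables of a term. -/
def fv : Term → Finset ℕ
  | var n => {n}
  | func _ _ ts => Finset.univ.sup fun i => (ts i).fv

/-- The constant zero (function symbol of arity 0, code 0). -/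
def zero : Term := func 0 0 (fun i => i.elim0)

/-- Successor (function symbol of arity 1, code 1). -/
def succ (t : Term) : Term := func 1 1 (fun _ => t)

end Term

/-- Formulas of arithmetic in the language with an extra nullary predicate
symbol `$` (`dollar`), used as a place holder. Quantifiers use de Bruijn indices. -/
inductive Formula : Type
  | falsum : Formula
  | dollar : Formula
  | eq : Term → Term → Formula
  | and : Formula → Formula → Formula
  | or : Formula → Formula → Formula
  | imp : Formula → Formula → Formula
  | all : Formula → Formula
  | ex : Formula → Formula

namespace Formula

def neg (φ : Formula) : Formula := φ.imp falsum

def iff (φ ψ : Formula) : Formula := (φ.imp ψ).and (ψ.imp φ)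

/-- `¬_$ φ`, i.e. `φ → $`. -/
def negD (φ : Formula) : Formula := φ.imp dollar

def lift (d : ℕ) : Formula → Formula
  | falsum => falsum
  | dollar => dollar
  | eq t u => eq (t.lift d) (u.lift d)
  | and φ ψ => and (φ.lift d) (ψ.lift d)
  | or φ ψ => or (φ.lift d) (ψ.lift d)
  | imp φ ψ => imp (φ.lift d) (ψ.lift d)
  | all φ => all (φ.lift (d + 1))
  | ex φ => ex (φ.lift (d + 1))

/-- Binder-removing substitution of term `s` for variable `k`. -/
def subst (k : ℕ) (s : Term) : Formula → Formula
  | falsum => falsum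
  | dollar => dollar
  | eq t u => eq (Term.subst k s t) (Term.subst k s u)
  | and φ ψ => and (Formula.subst k s φ) (Formula.subst k s ψ)
  | or φ ψ => or (Formula.subst k s φ) (Formula.subst k s ψ)
  | imp φ ψ => imp (Formula.subst k s φ) (Formula.subst k s ψ)
  | all φ => all (Formula.subst (k + 1) (s.lift 0) φ)
  | ex φ => ex (Formula.subst (k + 1) (s.lift 0) φ)

/-- In-place replacement of variable `k` by term `s`. -/
def repl (k : ℕ) (s : Term) : Formula → Formula
  | falsum => falsum
  | dollar => dollar
  | eq t u => eq (Term.repl k s t) (Term.repl k s u)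
  | and φ ψ => and (Formula.repl k s φ) (Formula.repl k s ψ)
  | or φ ψ => or (Formula.repl k s φ) (Formula.repl k s ψ)
  | imp φ ψ => imp (Formula.repl k s φ) (Formula.repl k s ψ)
  | all φ => all (Formula.repl (k + 1) (s.lift 0) φ)
  | ex φ => ex (Formula.repl (k + 1) (s.lift 0) φ)

/-- Free variables of a formula. -/
def fv : Formula → Finset ℕ
  | falsum => ∅
  | dollar => ∅
  | eq t u => t.fv ∪ u.fv
  | and φ ψ => φ.fv ∪ ψ.fv
  | or φ ψ => φ.fv ∪ ψ.fv
  | imp φ ψ => φ.fv ∪ ψ.fv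
  | all φ => (φ.fv.erase 0).image (· - 1)
  | ex φ => (φ.fv.erase 0).image (· - 1)

/-- A sentence is a formula with no free variables. -/
def sentence (φ : Formula) : Prop := φ.fv = ∅

/-- The formula is in the language of `HA` (the placeholder `$` does not occur). -/
def noDollar : Formula → Prop
  | falsum => True
  | dollar => False
  | eq _ _ => True
  | and φ ψ => φ.noDollar ∧ ψ.noDollar
  | or φ ψ => φ.noDollar ∧ ψ.noDollar
  | imp φ ψ => φ.noDollar ∧ ψ.noDollar
  | all φ => φ.noDollar
  | ex φ => φ.noDollar

/-- Quantifier-free formula of `HA`. -/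
def isQF : Formula → Prop
  | falsum => True
  | dollar => False
  | eq _ _ => True
  | and φ ψ => φ.isQF ∧ ψ.isQF
  | or φ ψ => φ.isQF ∧ ψ.isQF
  | imp φ ψ => φ.isQF ∧ ψ.isQF
  | all _ => False
  | ex _ => False

/-- Flip `+`/`-` in an alternation path (`true` = `+`, `false` = `-`). -/
def pflip (s : List Bool) : List Bool := s.map (!·)

/-- The set of alternation paths of a formula (Akama–Berardi–Hayashi–Kohlenbach). -/
def alt : Formula → Finset (List Bool)
  | falsum => {([] : List Bool)}
  | dollar => {([] : List Bool)}
  | eq _ _ => {([] : List Bool)}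
  | and φ ψ => φ.alt ∪ ψ.alt
  | or φ ψ => φ.alt ∪ ψ.alt
  | imp φ ψ => φ.alt.image pflip ∪ ψ.alt
  | all φ => φ.alt.image (fun s => if s.head? = some false then s else false :: s)
  | ex φ => φ.alt.image (fun s => if s.head? = some true then s else true :: s)

/-- The degree of a formula: the maximal length of its alternation paths. -/
def degree (φ : Formula) : ℕ := φ.alt.sup List.length

/-- The class `U_k` (for `k ≥ 1`: degree `k` and all maximal paths begin with `-`;
`U_0` is the class of degree-`0` formulas). -/
def inU (k : ℕ) (φ : Formula) : Prop :=
  φ.degree = k ∧ ∀ s ∈ φ.alt, s.length = k → k = 0 ∨ s.head? = some false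

/-- The class `E_k` (for `k ≥ 1`: degree `k` and all maximal paths begin with `+`;
`E_0` is the class of degree-`0` formulas). -/
def inE (k : ℕ) (φ : Formula) : Prop :=
  φ.degree = k ∧ ∀ s ∈ φ.alt, s.length = k → k = 0 ∨ s.head? = some true

/-- The dual of a prenex formula: swap quantifiers and negate the matrix. -/
def dual : Formula → Formula
  | all φ => ex φ.dual
  | ex φ => all φ.dual
  | φ => φ.neg

/-- The `$`-translation (Ishihara's generalized negative translation). -/
def dollarTr : Formula → Formula
  | falsum => dollar
  | dollar => dollar
  | eq t u => (eq t u).negD.negD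
  | and φ ψ => and φ.dollarTr ψ.dollarTr
  | or φ ψ => (or φ.dollarTr ψ.dollarTr).negD.negD
  | imp φ ψ => imp φ.dollarTr ψ.dollarTr
  | all φ => all φ.dollarTr
  | ex φ => (ex φ.dollarTr).negD.negD

/-- The Friedman A-translation: replace every prime formula `P` (including `⊥`)
by `P ∨ *` (here `*` is the placeholder `dollar`). -/
def aTr : Formula → Formula
  | falsum => or falsum dollar
  | dollar => dollar
  | eq t u => or (eq t u) dollar
  | and φ ψ => and φ.aTr ψ.aTr
  | or φ ψ => or φ.aTr ψ.aTr
  | imp φ ψ => imp φ.aTr ψ.aTr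
  | all φ => all φ.aTr
  | ex φ => ex φ.aTr

/-- Prefix `n` universal quantifiers. -/
def allN : Formula → ℕ → Formula
  | φ, 0 => φ
  | φ, n + 1 => Formula.allN φ.all n

/-- The universal closure of a formula. -/
def univClosure (φ : Formula) : Formula := φ.allN (φ.fv.sup Nat.succ)

end Formula

mutual
  /-- The class `Σ_k` of prenex formulas. -/
  inductive IsSigma : ℕ → Formula → Prop
    | qf {φ : Formula} : φ.isQF → IsSigma 0 φ
    | ofPi {k : ℕ} {φ : Formula} : IsPi k φ → IsSigma (k + 1) φ
    | ex {k : ℕ} {φ : Formula} : IsSigma (k + 1) φ → IsSigma (k + 1) φ.ex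
  /-- The class `Π_k` of prenex formulas. -/
  inductive IsPi : ℕ → Formula → Prop
    | qf {φ : Formula} : φ.isQF → IsPi 0 φ
    | ofSigma {k : ℕ} {φ : Formula} : IsSigma k φ → IsPi (k + 1) φ
    | all {k : ℕ} {φ : Formula} : IsPi (k + 1) φ → IsPi (k + 1) φ.all
end

/-- Axioms of Heyting arithmetic `HA` (Hilbert style intuitionistic predicate logic
with equality, plus arithmetical axioms and the induction scheme). -/
inductive HAAx : Formula → Prop
  | axK (φ ψ : Formula) : HAAx (φ.imp (ψ.imp φ))
  | axS (φ ψ χ : Formula) : HAAx ((φ.imp (ψ.imp χ)).imp ((φ.imp ψ).imp (φ.imp χ)))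
  | andI (φ ψ : Formula) : HAAx (φ.imp (ψ.imp (φ.and ψ)))
  | andE1 (φ ψ : Formula) : HAAx ((φ.and ψ).imp φ)
  | andE2 (φ ψ : Formula) : HAAx ((φ.and ψ).imp ψ)
  | orI1 (φ ψ : Formula) : HAAx (φ.imp (φ.or ψ))
  | orI2 (φ ψ : Formula) : HAAx (ψ.imp (φ.or ψ))
  | orE (φ ψ χ : Formula) : HAAx ((φ.imp χ).imp ((ψ.imp χ).imp ((φ.or ψ).imp χ)))
  | efq (φ : Formula) : HAAx (Formula.falsum.imp φ)
  | allE (φ : Formula) (t : Term) : HAAx (φ.all.imp (φ.subst 0 t))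
  | exI (φ : Formula) (t : Term) : HAAx ((φ.subst 0 t).imp φ.ex)
  | allK (φ ψ : Formula) : HAAx ((φ.imp ψ).all.imp (φ.all.imp ψ.all))
  | allVac (φ : Formula) : HAAx (φ.imp (φ.lift 0).all)
  | exE (φ ψ : Formula) : HAAx ((φ.imp (ψ.lift 0)).all.imp (φ.ex.imp ψ))
  | eqRefl (t : Term) : HAAx (Formula.eq t t)
  | eqSubst (t u : Term) (φ : Formula) : HAAx ((Formula.eq t u).imp ((φ.subst 0 t).imp (φ.subst 0 u)))
  | succNeZero (t : Term) : HAAx (Formula.neg (Formula.eq (Term.succ t) Term.zero))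
  | succInj (t u : Term) : HAAx ((Formula.eq (Term.succ t) (Term.succ u)).imp (Formula.eq t u))
  | ind (φ : Formula) : HAAx ((φ.subst 0 Term.zero).imp
      ((((φ.imp (φ.repl 0 (Term.succ (Term.var 0))))).all).imp φ.all))
  | atomDec (t u : Term) : HAAx ((Formula.eq t u).or (Formula.eq t u).neg)

/-- Provability from `HA` (in the language possibly containing `$`)
together with the extra axioms `T`. -/
inductive Proves (T : Set Formula) : Formula → Prop
  | ax {φ : Formula} : φ ∈ T → Proves T φ
  | ha {φ : Formula} : HAAx φ → Proves T φ
  | mp {φ ψ : Formula} : Proves T (φ.imp ψ) → Proves T φ → Proves T ψ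
  | gen {φ : Formula} : Proves T φ → Proves T φ.all

/-- The scheme `Σ_k-LEM`. -/
def sigLEM (k : ℕ) : Set Formula := {ψ | ∃ φ : Formula, IsSigma k φ ∧ ψ = φ.or φ.neg}

/-- The full law of excluded middle for `HA`-formulas; `Proves lemSet` is `PA`-provability. -/
def lemSet : Set Formula := {ψ | ∃ φ : Formula, φ.noDollar ∧ ψ = φ.or φ.neg}

/-- The scheme `F_k-LEM`: excluded middle for `HA`-formulas of degree at most `k`. -/
def fLEM (k : ℕ) : Set Formula :=
  {ψ | ∃ φ : Formula, φ.noDollar ∧ φ.degree ≤ k ∧ ψ = φ.or φ.neg}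

/-- `T` is (the set of extra axioms of) a semi-classical arithmetic:
`HA ⊆ HA + T ⊆ PA`, i.e. all axioms are `HA`-formulas provable in `PA`. -/
def IsSemiClassical (T : Set Formula) : Prop :=
  ∀ φ ∈ T, φ.noDollar ∧ Proves lemSet φ

mutual
  /-- The class `ℛ_{k+1}` (index `k` denotes `ℛ_{k+1}`). -/
  inductive Rcl : ℕ → Formula → Prop
    | base {k : ℕ} {φ : Formula} : φ.degree ≤ k → φ.noDollar → Rcl k φ
    | and {k : ℕ} {φ ψ : Formula} : Rcl k φ → Rcl k ψ → Rcl k (φ.and ψ)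
    | or {k : ℕ} {φ ψ : Formula} : Rcl k φ → Rcl k ψ → Rcl k (φ.or ψ)
    | all {k : ℕ} {φ : Formula} : Rcl k φ → Rcl k φ.all
    | imp {k : ℕ} {φ ψ : Formula} : Jcl k φ → Rcl k ψ → Rcl k (φ.imp ψ)
  /-- The class `𝒥_{k+1}` (index `k` denotes `𝒥_{k+1}`). -/
  inductive Jcl : ℕ → Formula → Prop
    | base {k : ℕ} {φ : Formula} : φ.degree ≤ k → φ.noDollar → Jcl k φ
    | and {k : ℕ} {φ ψ : Formula} : Jcl k φ → Jcl k ψ → Jcl k (φ.and ψ)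
    | or {k : ℕ} {φ ψ : Formula} : Jcl k φ → Jcl k ψ → Jcl k (φ.or ψ)
    | ex {k : ℕ} {φ : Formula} : Jcl k φ → Jcl k φ.ex
    | imp {k : ℕ} {φ ψ : Formula} : Rcl k φ → Jcl k ψ → Jcl k (φ.imp ψ)
end

/-- The class `𝒬_{k+1}` (index `k` denotes `𝒬_{k+1}`): generated from prime formulas by
`∧, ∨, ∀, ∃` and implications `J → Q` with `J ∈ 𝒥_{k+1}`. -/
inductive Qcl : ℕ → Formula → Prop
  | falsum {k : ℕ} : Qcl k Formula.falsum
  | eq {k : ℕ} {t u : Term} : Qcl k (Formula.eq t u)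
  | and {k : ℕ} {φ ψ : Formula} : Qcl k φ → Qcl k ψ → Qcl k (φ.and ψ)
  | or {k : ℕ} {φ ψ : Formula} : Qcl k φ → Qcl k ψ → Qcl k (φ.or ψ)
  | all {k : ℕ} {φ : Formula} : Qcl k φ → Qcl k φ.all
  | ex {k : ℕ} {φ : Formula} : Qcl k φ → Qcl k φ.ex
  | imp {k : ℕ} {φ ψ : Formula} : Jcl k φ → Qcl k ψ → Qcl k (φ.imp ψ)

/-- The class `𝒱_{k+1}` (index `k` denotes `𝒱_{k+1}`): generated from `𝒥_{k+1}` by `∧, ∀`. -/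
inductive Vcl : ℕ → Formula → Prop
  | ofJ {k : ℕ} {φ : Formula} : Jcl k φ → Vcl k φ
  | and {k : ℕ} {φ ψ : Formula} : Vcl k φ → Vcl k ψ → Vcl k (φ.and ψ)
  | all {k : ℕ} {φ : Formula} : Vcl k φ → Vcl k φ.all

/-- The class `EΠ_k`: generated from `Π_k` formulas by `∨` and `∀`. -/
inductive EPi (k : ℕ) : Formula → Prop
  | ofPi {φ : Formula} : IsPi k φ → EPi k φ
  | or {φ ψ : Formula} : EPi k φ → EPi k ψ → EPi k (φ.or ψ)
  | all {φ : Formula} : EPi k φ → EPi k φ.all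

/-- The class `EΣ_{k+1}` (index `k` denotes `EΣ_{k+1}`): existential quantifications
of `EΠ_k` formulas. -/
inductive ESig (k : ℕ) : Formula → Prop
  | ofEPi {φ : Formula} : EPi k φ → ESig k φ
  | ex {φ : Formula} : ESig k φ → ESig k φ.ex

/-- The scheme `Γ-DNEC`: universal closure of `¬¬φ` implies universal closure of `φ`. -/
def dnecSet (Γ : Set Formula) : Set Formula :=
  {ψ | ∃ φ ∈ Γ, ψ = (φ.neg.neg.univClosure).imp φ.univClosure}

/-- The scheme `Γ-DNSC`: universal closure of `¬¬φ` implies `¬¬` of the universal closure. -/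
def dnscSet (Γ : Set Formula) : Set Formula :=
  {ψ | ∃ φ ∈ Γ, ψ = (φ.neg.neg.univClosure).imp φ.univClosure.neg.neg}

/-- Double-negation elimination for sentences in `Γ`. -/
def dneSentSet (Γ : Set Formula) : Set Formula :=
  {ψ | ∃ φ ∈ Γ, φ.sentence ∧ ψ = φ.neg.neg.imp φ}
/-! ### Basic combinators -/

section Combinators

variable {T : Set Formula} {α β γ φ ψ χ : Formula}

theorem pid : Proves T (φ.imp φ) :=
  .mp (.mp (.ha (HAAx.axS φ (φ.imp φ) φ)) (.ha (HAAx.axK φ (φ.imp φ))))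
    (.ha (HAAx.axK φ φ))

theorem pcomp (h1 : Proves T (φ.imp ψ)) (h2 : Proves T (ψ.imp χ)) :
    Proves T (φ.imp χ) :=
  .mp (.mp (.ha (HAAx.axS φ ψ χ)) (.mp (.ha (HAAx.axK (ψ.imp χ) φ)) h2)) h1

theorem pmono (h : Proves T (ψ.imp χ)) :
    Proves T ((φ.imp ψ).imp (φ.imp χ)) :=
  .mp (.ha (HAAx.axS φ ψ χ)) (.mp (.ha (HAAx.axK (ψ.imp χ) φ)) h)

theorem pdist (h1 : Proves T (φ.imp (ψ.imp χ))) (h2 : Proves T (φ.imp ψ)) :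
    Proves T (φ.imp χ) :=
  .mp (.mp (.ha (HAAx.axS φ ψ χ)) h1) h2

theorem pswap (h : Proves T (α.imp (β.imp γ))) : Proves T (β.imp (α.imp γ)) :=
  pcomp (.ha (HAAx.axK β α)) (.mp (.ha (HAAx.axS α β γ)) h)

/-- The internal `C` combinator. -/
theorem pflipC : Proves T ((α.imp (β.imp γ)).imp (β.imp (α.imp γ))) :=
  pswap (pcomp (.ha (HAAx.axK β α)) (pswap (.ha (HAAx.axS α β γ))))

/-- `⊢ β → ((β → γ) → γ)`. -/
theorem pdni : Proves T (β.imp ((β.imp γ).imp γ)) := pswap pid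

/-- From `⊢ α → β` infer `⊢ (β → γ) → (α → γ)`. -/
theorem pcontra (h : Proves T (α.imp β)) :
    Proves T ((β.imp γ).imp (α.imp γ)) :=
  pswap (pcomp h pdni)

end Combinators

/-! ### Natural-deduction layer -/

/-- Derivability from a list of extra hypotheses. -/
def Derives (T : Set Formula) (Γ : List Formula) (φ : Formula) : Prop :=
  Proves T (Γ.foldr Formula.imp φ)

namespace Derives

variable {T : Set Formula} {Γ : List Formula} {a b φ ψ χ : Formula}

theorem ofProves (h : Proves T φ) : Derives T Γ φ := by
  induction Γ with
  | nil => exact h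
  | cons b Γ ih => exact .mp (.ha (HAAx.axK _ _)) ih

theorem toProves (h : Derives T [] φ) : Proves T φ := h

theorem wk (h : Derives T Γ φ) : Derives T (a :: Γ) φ :=
  .mp (.ha (HAAx.axK _ _)) h

private theorem selfFold : Proves T (a.imp (Γ.foldr Formula.imp a)) := by
  induction Γ with
  | nil => exact pid
  | cons b Γ ih => exact pcomp ih (.ha (HAAx.axK _ b))

theorem hyp (h : a ∈ Γ) : Derives T Γ a := by
  induction Γ with
  | nil => cases h
  | cons b Γ ih =>
    rcases List.mem_cons.mp h with rfl | h
    · exact selfFold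
    · exact (ih h).wk

theorem h0 : Derives T (a :: Γ) a := hyp List.mem_cons_self

private theorem foldS :
    Proves T ((Γ.foldr Formula.imp (φ.imp ψ)).imp
      ((Γ.foldr Formula.imp φ).imp (Γ.foldr Formula.imp ψ))) := by
  induction Γ with
  | nil => exact pid
  | cons b Γ ih => exact pcomp (pmono ih) (.ha (HAAx.axS _ _ _))

theorem mp (h1 : Derives T Γ (φ.imp ψ)) (h2 : Derives T Γ φ) :
    Derives T Γ ψ :=
  Proves.mp (Proves.mp foldS h1) h2

private theorem foldIn :
    Proves T ((a.imp (Γ.foldr Formula.imp φ)).imp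
      (Γ.foldr Formula.imp (a.imp φ))) := by
  induction Γ with
  | nil => exact pid
  | cons b Γ ih => exact pcomp pflipC (pmono ih)

theorem intro (h : Derives T (a :: Γ) φ) : Derives T Γ (a.imp φ) :=
  Proves.mp foldIn h

private theorem foldOut :
    Proves T ((Γ.foldr Formula.imp (a.imp φ)).imp
      (a.imp (Γ.foldr Formula.imp φ))) := by
  induction Γ with
  | nil => exact pid
  | cons b Γ ih => exact pcomp (pmono ih) pflipC

theorem elimImp (h : Derives T Γ (a.imp φ)) : Derives T (a :: Γ) φ :=
  Derives.mp (wk h) h0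

theorem andI (h1 : Derives T Γ φ) (h2 : Derives T Γ ψ) :
    Derives T Γ (φ.and ψ) :=
  (ofProves (.ha (HAAx.andI φ ψ)) |>.mp h1).mp h2

theorem andE1 (h : Derives T Γ (φ.and ψ)) : Derives T Γ φ :=
  (ofProves (.ha (HAAx.andE1 φ ψ))).mp h

theorem andE2 (h : Derives T Γ (φ.and ψ)) : Derives T Γ ψ :=
  (ofProves (.ha (HAAx.andE2 φ ψ))).mp h

theorem orI1 (h : Derives T Γ φ) : Derives T Γ (φ.or ψ) :=
  (ofProves (.ha (HAAx.orI1 φ ψ))).mp h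

theorem orI2 (h : Derives T Γ ψ) : Derives T Γ (φ.or ψ) :=
  (ofProves (.ha (HAAx.orI2 φ ψ))).mp h

theorem orE (h : Derives T Γ (φ.or ψ)) (h1 : Derives T (φ :: Γ) χ)
    (h2 : Derives T (ψ :: Γ) χ) : Derives T Γ χ :=
  (((ofProves (.ha (HAAx.orE φ ψ χ))).mp (intro h1)).mp (intro h2)).mp h

theorem efq (h : Derives T Γ Formula.falsum) : Derives T Γ φ :=
  (ofProves (.ha (HAAx.efq φ))).mp h

end Derives
/-! ### Lift/subst lemmas -/

theorem Term.subst_lift (k : ℕ) (t : Term) :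
    Term.subst k (Term.var k) (t.lift (k + 1)) = t := by
  induction t generalizing k with
  | var n =>
    simp only [Term.lift, Term.subst]
    rcases lt_trichotomy n k with h | rfl | h
    · rw [if_pos (by omega), Term.subst, if_pos h]
    · rw [if_pos (by omega), Term.subst, if_neg (by omega), if_pos rfl]
    · rw [if_neg (by omega), Term.subst, if_neg (by omega), if_neg (by omega)]
      simp
  | func c a ts ih =>
    simp only [Term.lift, Term.subst, Term.func.injEq, heq_eq_eq, true_and]
    funext i; exact ih i k

theorem Formula.subst_lift (k : ℕ) (φ : Formula) :
    Formula.subst k (Term.var k) (φ.lift (k + 1)) = φ := by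
  induction φ generalizing k with
  | falsum => rfl
  | dollar => rfl
  | eq t u => simp [Formula.lift, Formula.subst, Term.subst_lift]
  | and φ ψ ihφ ihψ => simp [Formula.lift, Formula.subst, ihφ, ihψ]
  | or φ ψ ihφ ihψ => simp [Formula.lift, Formula.subst, ihφ, ihψ]
  | imp φ ψ ihφ ihψ => simp [Formula.lift, Formula.subst, ihφ, ihψ]
  | all φ ih =>
    simp only [Formula.lift, Formula.subst, Formula.all.injEq]
    have : (Term.var k).lift 0 = Term.var (k + 1) := by
      simp [Term.lift]
    rw [this]; exact ih (k + 1)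
  | ex φ ih =>
    simp only [Formula.lift, Formula.subst, Formula.ex.injEq]
    have : (Term.var k).lift 0 = Term.var (k + 1) := by
      simp [Term.lift]
    rw [this]; exact ih (k + 1)

/-! ### Quantifier rules -/

section Quant

variable {T : Set Formula} {α β χ : Formula}

theorem allMono (h : Proves T (α.imp β)) : Proves T (α.all.imp β.all) :=
  .mp (.ha (HAAx.allK α β)) (.gen h)

theorem allIntroLift (h : Proves T ((α.lift 0).imp χ)) :
    Proves T (α.imp χ.all) :=
  pcomp (.ha (HAAx.allVac α)) (.mp (.ha (HAAx.allK (α.lift 0) χ)) (.gen h))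

/-- `⊢ (∀ (χ lifted)) → χ`. -/
theorem allInstLift : Proves T ((χ.lift 1).all.imp χ) := by
  have := Proves.ha (T := T) (HAAx.allE (χ.lift 1) (Term.var 0))
  rwa [Formula.subst_lift 0 χ] at this

/-- `⊢ χ → ∃ (χ lifted)`. -/
theorem exIntroLift : Proves T (χ.imp (χ.lift 1).ex) := by
  have := Proves.ha (T := T) (HAAx.exI (χ.lift 1) (Term.var 0))
  rwa [Formula.subst_lift 0 χ] at this

theorem exElimLift (h : Proves T (α.imp (β.lift 0))) :
    Proves T (α.ex.imp β) :=
  .mp (.ha (HAAx.exE α β)) (.gen h)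

theorem exMono (h : Proves T (α.imp β)) : Proves T (α.ex.imp β.ex) :=
  exElimLift (pcomp h (show Proves T (β.imp ((β.ex).lift 0)) from exIntroLift))

end Quant
/-! ### Theory monotonicity and class lemmas -/

theorem Proves.monoT {T T' : Set Formula} (hT : T ⊆ T') {φ : Formula}
    (h : Proves T φ) : Proves T' φ := by
  induction h with
  | ax h => exact .ax (hT h)
  | ha h => exact .ha h
  | mp _ _ ih1 ih2 => exact .mp ih1 ih2
  | gen _ ih => exact .gen ih

theorem isSigma_mono {k : ℕ} {φ : Formula} (h : IsSigma k φ) : IsSigma (k + 1) φ :=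
  IsSigma.rec (motive_1 := fun k φ _ => IsSigma (k + 1) φ)
    (motive_2 := fun k φ _ => IsPi (k + 1) φ)
    (fun h => .ofPi (.qf h)) (fun _ ih => .ofPi ih) (fun _ ih => .ex ih)
    (fun h => .ofSigma (.qf h)) (fun _ ih => .ofSigma ih) (fun _ ih => .all ih) h

theorem isPi_mono {k : ℕ} {φ : Formula} (h : IsPi k φ) : IsPi (k + 1) φ :=
  IsPi.rec (motive_1 := fun k φ _ => IsSigma (k + 1) φ)
    (motive_2 := fun k φ _ => IsPi (k + 1) φ)
    (fun h => .ofPi (.qf h)) (fun _ ih => .ofPi ih) (fun _ ih => .ex ih)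
    (fun h => .ofSigma (.qf h)) (fun _ ih => .ofSigma ih) (fun _ ih => .all ih) h

theorem sigLEM_mono {k : ℕ} : sigLEM k ⊆ sigLEM (k + 1) := by
  rintro ψ ⟨φ, hφ, rfl⟩
  exact ⟨φ, isSigma_mono hφ, rfl⟩

theorem dual_of_isQF {φ : Formula} (h : φ.isQF) : φ.dual = φ.neg := by
  cases φ <;> first | rfl | exact absurd h (by simp [Formula.isQF])

theorem isQF_neg {φ : Formula} (h : φ.isQF) : φ.neg.isQF := ⟨h, trivial⟩

private theorem qf_dual_pi {φ : Formula} (h : φ.isQF) : IsPi 0 φ.dual := by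
  rw [dual_of_isQF h]; exact .qf (isQF_neg h)

private theorem qf_dual_sig {φ : Formula} (h : φ.isQF) : IsSigma 0 φ.dual := by
  rw [dual_of_isQF h]; exact .qf (isQF_neg h)

theorem isSigma_dual {k : ℕ} {φ : Formula} (h : IsSigma k φ) : IsPi k φ.dual :=
  IsSigma.rec (motive_1 := fun k φ _ => IsPi k φ.dual)
    (motive_2 := fun k φ _ => IsSigma k φ.dual)
    (fun h => qf_dual_pi h)
    (fun {k φ} _ ih => show IsPi (k + 1) φ.dual from IsPi.ofSigma ih)
    (fun {k φ} _ ih => show IsPi (k + 1) φ.dual.all from IsPi.all ih)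
    (fun h => qf_dual_sig h)
    (fun {k φ} _ ih => show IsSigma (k + 1) φ.dual from IsSigma.ofPi ih)
    (fun {k φ} _ ih => show IsSigma (k + 1) φ.dual.ex from IsSigma.ex ih) h

theorem isPi_dual {k : ℕ} {φ : Formula} (h : IsPi k φ) : IsSigma k φ.dual :=
  IsPi.rec (motive_1 := fun k φ _ => IsPi k φ.dual)
    (motive_2 := fun k φ _ => IsSigma k φ.dual)
    (fun h => qf_dual_pi h)
    (fun {k φ} _ ih => show IsPi (k + 1) φ.dual from IsPi.ofSigma ih)
    (fun {k φ} _ ih => show IsPi (k + 1) φ.dual.all from IsPi.all ih)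
    (fun h => qf_dual_sig h)
    (fun {k φ} _ ih => show IsSigma (k + 1) φ.dual from IsSigma.ofPi ih)
    (fun {k φ} _ ih => show IsSigma (k + 1) φ.dual.ex from IsSigma.ex ih) h

/-! ### Decidability of quantifier-free formulas -/

theorem qfDec {T : Set Formula} : ∀ {φ : Formula}, φ.isQF →
    Proves T (φ.or φ.neg) := by
  intro φ h
  induction φ with
  | falsum => exact .mp (.ha (HAAx.orI2 _ _)) pid
  | dollar => exact absurd h (by simp [Formula.isQF])
  | eq t u => exact .ha (HAAx.atomDec t u)
  | and α β ihα ihβ =>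
    obtain ⟨hα, hβ⟩ := h
    refine Derives.toProves ?_
    refine (Derives.ofProves (ihα hα)).orE ?_ ?_
    · refine (Derives.ofProves (ihβ hβ)).orE ?_ ?_
      · exact .orI1 (.andI (.hyp (by simp)) (.hyp (by simp)))
      · exact .orI2 (.intro (((Derives.hyp (show β.neg ∈ _ by simp)).mp
          (Derives.andE2 .h0))))
    · exact .orI2 (.intro (((Derives.hyp (show α.neg ∈ _ by simp)).mp
        (Derives.andE1 .h0))))
  | or α β ihα ihβ =>
    obtain ⟨hα, hβ⟩ := h
    refine Derives.toProves ?_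
    refine (Derives.ofProves (ihα hα)).orE (.orI1 (.orI1 .h0)) ?_
    refine (Derives.ofProves (ihβ hβ)).wk.orE (.orI1 (.orI2 .h0)) ?_
    refine .orI2 (.intro (Derives.orE .h0 ?_ ?_))
    · exact (Derives.hyp (show α.neg ∈ _ by simp)).mp .h0
    · exact (Derives.hyp (show β.neg ∈ _ by simp)).mp .h0
  | imp α β ihα ihβ =>
    obtain ⟨hα, hβ⟩ := h
    refine Derives.toProves ?_
    refine (Derives.ofProves (ihβ hβ)).orE (.orI1 (.intro (Derives.wk .h0))) ?_
    refine (Derives.ofProves (ihα hα)).wk.orE ?_ ?_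
    · refine .orI2 (.intro ?_)
      exact (Derives.hyp (show β.neg ∈ _ by simp)).mp (Derives.mp .h0
        (Derives.hyp (show α ∈ _ by simp)))
    · exact .orI1 (.intro (.efq ((Derives.hyp (show α.neg ∈ _ by simp)).mp .h0)))
  | all φ ih => exact absurd h (by simp [Formula.isQF])
  | ex φ ih => exact absurd h (by simp [Formula.isQF])
/-! ### iff helpers -/

section IffHelpers
variable {T : Set Formula} {φ ψ : Formula}

theorem iffI (h1 : Proves T (φ.imp ψ)) (h2 : Proves T (ψ.imp φ)) :
    Proves T (φ.iff ψ) :=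
  .mp (.mp (.ha (HAAx.andI _ _)) h1) h2

theorem iff1 (h : Proves T (φ.iff ψ)) : Proves T (φ.imp ψ) :=
  .mp (.ha (HAAx.andE1 _ _)) h

theorem iff2 (h : Proves T (φ.iff ψ)) : Proves T (ψ.imp φ) :=
  .mp (.ha (HAAx.andE2 _ _)) h

end IffHelpers

/-! ### `$ → φ^$` -/

theorem dollarImp {T : Set Formula} : ∀ φ : Formula,
    Proves T (Formula.dollar.imp φ.dollarTr)
  | .falsum => pid
  | .dollar => pid
  | .eq t u => .ha (HAAx.axK .dollar ((Formula.eq t u).negD))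
  | .and φ ψ => pdist (pcomp (dollarImp φ) (.ha (HAAx.andI _ _))) (dollarImp ψ)
  | .or φ ψ => .ha (HAAx.axK .dollar ((φ.dollarTr.or ψ.dollarTr).negD))
  | .imp φ ψ => pcomp (dollarImp ψ) (.ha (HAAx.axK ψ.dollarTr φ.dollarTr))
  | .all φ => allIntroLift
      (show Proves T ((Formula.dollar.lift 0).imp φ.dollarTr) from dollarImp φ)
  | .ex φ => .ha (HAAx.axK .dollar ((φ.dollarTr.ex).negD))

/-! ### stability of `A ∨ $` for decidable `A` -/

theorem stabOrDollar {T : Set Formula} {A : Formula}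
    (h : Proves T (A.or A.neg)) :
    Proves T (((A.or .dollar).negD.negD).imp (A.or .dollar)) := by
  refine Derives.toProves (.intro ?_)
  refine (Derives.ofProves h).orE (.orI1 .h0) (.orI2 ?_)
  refine Derives.mp (φ := (A.or Formula.dollar).negD)
    (Derives.hyp (show (A.or Formula.dollar).negD.negD ∈ _ by simp)) ?_
  refine .intro (Derives.orE .h0 ?_ .h0)
  exact .efq ((Derives.hyp (show A.neg ∈ _ by simp)).mp .h0)

/-! ### the dual lemmas: `⊢ θ ∨ θᵈ` and `⊢ θ → θᵈ → ⊥` over `Σ_k`-LEM -/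

private abbrev DualLem (m : ℕ) (θ : Formula) : Prop :=
  Proves (sigLEM m) (θ.or θ.dual) ∧
    Proves (sigLEM m) (θ.imp (θ.dual.imp .falsum))

private theorem dualLem_qf {m : ℕ} {θ : Formula} (h : θ.isQF) : DualLem m θ := by
  constructor
  · rw [dual_of_isQF h]; exact qfDec h
  · rw [dual_of_isQF h]; exact pdni

private theorem dualLem_mono {m : ℕ} {θ : Formula} (h : DualLem m θ) :
    DualLem (m + 1) θ :=
  ⟨h.1.monoT sigLEM_mono, h.2.monoT sigLEM_mono⟩

/-- `¬θᵈ → θ` from `θ ∨ θᵈ`. -/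
private theorem ofNotDual {T : Set Formula} {θ : Formula}
    (h : Proves T (θ.or θ.dual)) :
    Proves T ((θ.dual.imp .falsum).imp θ) := by
  refine Derives.toProves (.intro ?_)
  refine (Derives.ofProves h).orE .h0 ?_
  exact .efq ((Derives.hyp (show θ.dual.imp .falsum ∈ _ by simp)).mp .h0)

/-- `¬θ → θᵈ` from `θ ∨ θᵈ`. -/
private theorem toDualOfNot {T : Set Formula} {θ : Formula}
    (h : Proves T (θ.or θ.dual)) :
    Proves T ((θ.imp .falsum).imp θ.dual) := by
  refine Derives.toProves (.intro ?_)
  refine (Derives.ofProves h).orE ?_ .h0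
  exact .efq ((Derives.hyp (show θ.imp .falsum ∈ _ by simp)).mp .h0)

private theorem dualLem_ex {k : ℕ} {θ : Formula} (hθ : IsSigma (k + 1) θ)
    (ih : DualLem (k + 1) θ) : DualLem (k + 1) θ.ex := by
  have lem : Proves (sigLEM (k + 1)) ((θ.ex).or (θ.ex).neg) :=
    .ax ⟨θ.ex, IsSigma.ex hθ, rfl⟩
  constructor
  · -- ex θ ∨ all θ.dual
    have s : Proves (sigLEM (k + 1))
        ((((θ.ex).neg).lift 0).imp θ.dual) := by
      show Proves (sigLEM (k + 1)) (((θ.lift 1).ex.imp .falsum).imp θ.dual)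
      exact pcomp (pcontra exIntroLift) (toDualOfNot ih.1)
    have step : Proves (sigLEM (k + 1)) (((θ.ex).neg).imp θ.dual.all) :=
      allIntroLift s
    refine Derives.toProves ((Derives.ofProves lem).orE (.orI1 .h0)
      (.orI2 ((Derives.ofProves step).mp .h0)))
  · -- ex θ → all θ.dual → ⊥
    refine exElimLift ?_
    show Proves (sigLEM (k + 1))
      (θ.imp (((θ.dual.lift 1).all).imp .falsum))
    refine Derives.toProves (.intro (.intro ?_))
    exact ((Derives.ofProves ih.2).mp (.hyp (by simp))).mp
      ((Derives.ofProves allInstLift).mp .h0)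

private theorem dualLem_all {k : ℕ} {θ : Formula} (hθ : IsPi (k + 1) θ)
    (ih : DualLem (k + 1) θ) : DualLem (k + 1) θ.all := by
  have lem : Proves (sigLEM (k + 1)) ((θ.dual.ex).or (θ.dual.ex).neg) :=
    .ax ⟨θ.dual.ex, IsSigma.ex (isPi_dual hθ), rfl⟩
  constructor
  · -- all θ ∨ ex θ.dual
    have s : Proves (sigLEM (k + 1))
        ((((θ.dual.ex).neg).lift 0).imp θ) := by
      show Proves (sigLEM (k + 1)) ((((θ.dual.lift 1).ex).imp .falsum).imp θ)
      exact pcomp (pcontra exIntroLift) (ofNotDual ih.1)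
    have step : Proves (sigLEM (k + 1)) (((θ.dual.ex).neg).imp θ.all) :=
      allIntroLift s
    refine Derives.toProves ((Derives.ofProves lem).orE
      (.orI2 .h0) (.orI1 ((Derives.ofProves step).mp .h0)))
  · -- all θ → ex θ.dual → ⊥
    refine pswap (exElimLift ?_)
    show Proves (sigLEM (k + 1))
      (θ.dual.imp (((θ.lift 1).all).imp .falsum))
    refine Derives.toProves (.intro (.intro ?_))
    exact ((Derives.ofProves ih.2).mp
      ((Derives.ofProves allInstLift).mp .h0)).mp (.hyp (by simp))

theorem dualLem_sig {k : ℕ} {θ : Formula} (h : IsSigma k θ) : DualLem k θ :=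
  IsSigma.rec (motive_1 := fun k θ _ => DualLem k θ)
    (motive_2 := fun k θ _ => DualLem k θ)
    (fun h => dualLem_qf h) (fun _ ih => dualLem_mono ih)
    (fun a ih => dualLem_ex a ih)
    (fun h => dualLem_qf h) (fun _ ih => dualLem_mono ih)
    (fun a ih => dualLem_all a ih) h

theorem dualLem_pi {k : ℕ} {θ : Formula} (h : IsPi k θ) : DualLem k θ :=
  IsPi.rec (motive_1 := fun k θ _ => DualLem k θ)
    (motive_2 := fun k θ _ => DualLem k θ)
    (fun h => dualLem_qf h) (fun _ ih => dualLem_mono ih)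
    (fun a ih => dualLem_ex a ih)
    (fun h => dualLem_qf h) (fun _ ih => dualLem_mono ih)
    (fun a ih => dualLem_all a ih) h
/-! ### more helpers -/

section MoreHelpers
variable {T : Set Formula} {A B X α β : Formula}

/-- `⊢ X → ¬_$¬_$ X`. -/
theorem dniD : Proves T (X.imp X.negD.negD) := pdni

/-- `⊢ $ → ¬_$¬_$ X`. -/
theorem dollarNegD : Proves T (Formula.dollar.imp X.negD.negD) :=
  .ha (HAAx.axK .dollar X.negD)

theorem negD2Mono (h : Proves T (A.imp B)) :
    Proves T (A.negD.negD.imp B.negD.negD) :=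
  pcontra (pcontra h)

end MoreHelpers

/-! ### the quantifier-free case -/

theorem qfTr {T : Set Formula} : ∀ {φ : Formula}, φ.isQF →
    Proves T (φ.dollarTr.iff (φ.or .dollar)) := by
  intro φ h
  induction φ with
  | falsum =>
    refine iffI (.ha (HAAx.orI2 _ _)) ?_
    exact Derives.toProves (.intro (Derives.orE .h0 (.efq .h0) .h0))
  | dollar => exact absurd h (by simp [Formula.isQF])
  | eq t u =>
    refine iffI ?_ ?_
    · refine Derives.toProves (.intro ?_)
      refine (Derives.ofProves (.ha (HAAx.atomDec t u))).orE (.orI1 .h0) ?_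
      refine .orI2 (Derives.mp (φ := (Formula.eq t u).negD) (ψ := .dollar)
        (show Derives T _ (((Formula.eq t u).negD).imp .dollar) from
          Derives.hyp (a := (Formula.eq t u).dollarTr) (by simp)) ?_)
      exact .intro (.efq ((Derives.hyp
        (show (Formula.eq t u).neg ∈ _ by simp)).mp .h0))
    · refine Derives.toProves (.intro (Derives.orE .h0 ?_ ?_))
      · exact (Derives.ofProves pdni).mp .h0
      · exact (Derives.ofProves dollarNegD).mp .h0
  | and α β ihα ihβ =>
    obtain ⟨hα, hβ⟩ := h
    have aT : Proves T (α.imp α.dollarTr) :=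
      pcomp (.ha (HAAx.orI1 α .dollar)) (iff2 (ihα hα))
    have bT : Proves T (β.imp β.dollarTr) :=
      pcomp (.ha (HAAx.orI1 β .dollar)) (iff2 (ihβ hβ))
    refine iffI ?_ ?_
    · refine Derives.toProves (.intro ?_)
      have a : Derives T [α.dollarTr.and β.dollarTr] (α.or .dollar) :=
        (Derives.ofProves (iff1 (ihα hα))).mp (.andE1 .h0)
      have b : Derives T [α.dollarTr.and β.dollarTr] (β.or .dollar) :=
        (Derives.ofProves (iff1 (ihβ hβ))).mp (.andE2 .h0)
      refine a.orE ?_ (.orI2 .h0)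
      refine b.wk.orE ?_ (.orI2 .h0)
      exact .orI1 (.andI (.hyp (by simp)) (.hyp (by simp)))
    · refine Derives.toProves (.intro (Derives.orE .h0 ?_ ?_))
      · exact .andI ((Derives.ofProves aT).mp (.andE1 .h0))
          ((Derives.ofProves bT).mp (.andE2 .h0))
      · exact .andI ((Derives.ofProves (dollarImp α)).mp .h0)
          ((Derives.ofProves (dollarImp β)).mp .h0)
  | or α β ihα ihβ =>
    obtain ⟨hα, hβ⟩ := h
    have aT : Proves T (α.imp α.dollarTr) :=
      pcomp (.ha (HAAx.orI1 α .dollar)) (iff2 (ihα hα))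
    have bT : Proves T (β.imp β.dollarTr) :=
      pcomp (.ha (HAAx.orI1 β .dollar)) (iff2 (ihβ hβ))
    refine iffI ?_ ?_
    · have u : Proves T ((α.dollarTr.or β.dollarTr).imp ((α.or β).or .dollar)) := by
        refine Derives.toProves (.intro (Derives.orE .h0 ?_ ?_))
        · exact ((Derives.ofProves (iff1 (ihα hα))).mp .h0).orE
            (.orI1 (.orI1 .h0)) (.orI2 .h0)
        · exact ((Derives.ofProves (iff1 (ihβ hβ))).mp .h0).orE
            (.orI1 (.orI2 .h0)) (.orI2 .h0)
      exact pcomp (negD2Mono u) (stabOrDollar (qfDec ⟨hα, hβ⟩))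
    · refine Derives.toProves (.intro (Derives.orE .h0 ?_ ?_))
      · refine Derives.orE .h0 ?_ ?_
        · exact (Derives.ofProves (pcomp aT
            (pcomp (.ha (HAAx.orI1 _ _)) dniD))).mp .h0
        · exact (Derives.ofProves (pcomp bT
            (pcomp (.ha (HAAx.orI2 _ _)) dniD))).mp .h0
      · exact (Derives.ofProves dollarNegD).mp .h0
  | imp α β ihα ihβ =>
    obtain ⟨hα, hβ⟩ := h
    have aT : Proves T (α.imp α.dollarTr) :=
      pcomp (.ha (HAAx.orI1 α .dollar)) (iff2 (ihα hα))
    have bT : Proves T (β.imp β.dollarTr) :=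
      pcomp (.ha (HAAx.orI1 β .dollar)) (iff2 (ihβ hβ))
    refine iffI ?_ ?_
    · refine Derives.toProves (.intro ?_)
      refine (Derives.ofProves (qfDec hα)).orE ?_ ?_
      · have b : Derives T [α, α.dollarTr.imp β.dollarTr] (β.or .dollar) := by
          refine (Derives.ofProves (iff1 (ihβ hβ))).mp ?_
          exact (Derives.hyp (show α.dollarTr.imp β.dollarTr ∈ _ by simp)).mp
            ((Derives.ofProves aT).mp .h0)
        refine b.orE ?_ (.orI2 .h0)
        exact .orI1 (.intro (.hyp (by simp)))
      · exact .orI1 (.intro (.efq ((Derives.hyp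
          (show α.neg ∈ _ by simp)).mp .h0)))
    · refine Derives.toProves (.intro (Derives.orE .h0 ?_ ?_))
      · refine .intro ?_
        refine ((Derives.ofProves (iff1 (ihα hα))).mp .h0).orE ?_ ?_
        · exact (Derives.ofProves bT).mp
            ((Derives.hyp (show α.imp β ∈ _ by simp)).mp .h0)
        · exact (Derives.ofProves (dollarImp β)).mp .h0
      · exact (Derives.ofProves (pcomp (dollarImp β)
          (.ha (HAAx.axK β.dollarTr α.dollarTr)))).mp .h0
  | all φ ih => exact absurd h (by simp [Formula.isQF])
  | ex φ ih => exact absurd h (by simp [Formula.isQF])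

/-! ### the main induction -/

private abbrev MainP (k : ℕ) (φ : Formula) : Prop :=
  Proves (sigLEM k) (φ.dollarTr.iff (φ.or .dollar))

private theorem main_ex {k : ℕ} {φ : Formula} (hφ : IsSigma (k + 1) φ)
    (ih : MainP (k + 1) φ) : MainP (k + 1) φ.ex := by
  have lem : Proves (sigLEM (k + 1)) ((φ.ex).or (φ.ex).neg) :=
    .ax ⟨φ.ex, IsSigma.ex hφ, rfl⟩
  have w : Proves (sigLEM (k + 1))
      ((φ.or .dollar).imp ((φ.lift 1).ex.or .dollar)) :=
    Derives.toProves (.intro (Derives.orE .h0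
      (.orI1 ((Derives.ofProves exIntroLift).mp .h0)) (.orI2 .h0)))
  have u1 : Proves (sigLEM (k + 1)) ((φ.dollarTr.ex).imp ((φ.ex).or .dollar)) := by
    refine exElimLift ?_
    show Proves (sigLEM (k + 1)) (φ.dollarTr.imp ((φ.lift 1).ex.or .dollar))
    exact pcomp (iff1 ih) w
  refine iffI (pcomp (negD2Mono u1) (stabOrDollar lem)) ?_
  refine Derives.toProves (.intro (Derives.orE .h0 ?_ ?_))
  · exact (Derives.ofProves (pcomp (exMono (pcomp (.ha (HAAx.orI1 φ .dollar))
      (iff2 ih))) dniD)).mp .h0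
  · exact (Derives.ofProves dollarNegD).mp .h0

private theorem main_all {k : ℕ} {φ : Formula} (hφ : IsPi (k + 1) φ)
    (ih : MainP (k + 1) φ) : MainP (k + 1) φ.all := by
  have L := dualLem_pi (IsPi.all hφ)
  have Lφ := (dualLem_pi hφ).2
  have s1 : Proves (sigLEM (k + 1)) ((φ.dollarTr.all).imp ((φ.or .dollar).all)) :=
    allMono (iff1 ih)
  have t : Proves (sigLEM (k + 1))
      (φ.dual.imp ((((φ.lift 1).or .dollar).all).imp .dollar)) := by
    refine Derives.toProves (.intro (.intro ?_))
    have c : Derives (sigLEM (k + 1))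
        [((φ.lift 1).or .dollar).all, φ.dual] (φ.or .dollar) :=
      (Derives.ofProves (allInstLift (χ := φ.or .dollar))).mp .h0
    refine c.orE ?_ .h0
    exact .efq (((Derives.ofProves Lφ).mp .h0).mp (.hyp (by simp)))
  have s2 : Proves (sigLEM (k + 1))
      ((φ.dual.ex).imp (((φ.or .dollar).all).imp .dollar)) := exElimLift t
  refine iffI ?_ ?_
  · refine Derives.toProves (.intro ?_)
    have a : Derives (sigLEM (k + 1)) [φ.dollarTr.all] ((φ.or .dollar).all) :=
      (Derives.ofProves s1).mp .h0
    refine (Derives.ofProves L.1).orE (.orI1 .h0) ?_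
    exact .orI2 (((Derives.ofProves s2).mp .h0).mp a.wk)
  · refine Derives.toProves (.intro (Derives.orE .h0 ?_ ?_))
    · exact (Derives.ofProves (allMono (pcomp (.ha (HAAx.orI1 φ .dollar))
        (iff2 ih)))).mp .h0
    · exact (Derives.ofProves (allIntroLift
        (show Proves _ ((Formula.dollar.lift 0).imp φ.dollarTr) from
          dollarImp φ))).mp .h0

theorem main_sig {k : ℕ} {φ : Formula} (h : IsSigma k φ) : MainP k φ :=
  IsSigma.rec (motive_1 := fun k φ _ => MainP k φ)
    (motive_2 := fun k φ _ => MainP k φ)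
    (fun h => qfTr h) (fun _ ih => ih.monoT sigLEM_mono)
    (fun a ih => main_ex a ih)
    (fun h => qfTr h) (fun _ ih => ih.monoT sigLEM_mono)
    (fun a ih => main_all a ih) h

theorem main_pi {k : ℕ} {φ : Formula} (h : IsPi k φ) : MainP k φ :=
  IsPi.rec (motive_1 := fun k φ _ => MainP k φ)
    (motive_2 := fun k φ _ => MainP k φ)
    (fun h => qfTr h) (fun _ ih => ih.monoT sigLEM_mono)
    (fun a ih => main_ex a ih)
    (fun h => qfTr h) (fun _ ih => ih.monoT sigLEM_mono)
    (fun a ih => main_all a ih) h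

/-- for `φ ∈ Π_k` (resp. `φ ∈ Σ_k`),
`HA^$ + Σ_k-LEM ⊢ φ^$ ↔ φ ∨ $`. -/
theorem dollarTr_prenex (k : ℕ) (φ : Formula) (hφ : IsPi k φ ∨ IsSigma k φ) :
    Proves (sigLEM k) (φ.dollarTr.iff (φ.or Formula.dollar)) := by
  rcases hφ with h | h
  · exact main_pi h
  · exact main_sig h

end SemiClassicalArith
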